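/- Let S be a set of n points in ℝ^d (d ≥ 2). Suppose there is a hyperplane P such that S ∩ P spans at least c₁·|S ∩ P|^{d−1} distinct (d−2)-dimensional flats within P, and |S ∩ P| ≥ c₂·n. Let x = |S \ P|. Then the number of hyperplanes of ℝ^d spanned by S is at least γ·x·n^{d−1}, where γ > 0 depends only on c₁, c₂, and d. -/

import Mathlib

/-- A `k`-dimensional flat of `ℝ^d` spanned by a point set `S`: it is the affine span of
some subset of `S` and its direction has dimension `k`. -/
def SpannedFlats (d : ℕ) (S : Set (Fin d → ℝ)) (k : ℕ) :
    Set (AffineSubspace ℝ (Fin d → ℝ)) :=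
  {H | Module.finrank ℝ H.direction = k ∧ ∃ T ⊆ S, affineSpan ℝ T = H}

open Module
open scoped Classical

section ErdosBeckHelpers
variable {d : ℕ}
local notation "V" => Fin d → ℝ




/-- Greedy extraction: if `span s ⊔ W₀ = W` and `finrank W ≤ finrank W₀ + k`, we can find
`b ⊆ s` with at most `k` elements such that `span b ⊔ W₀ = W`. -/
lemma extract_span_aux (k : ℕ) :
    ∀ (W W₀ : Submodule ℝ V) (s : Set V),
      Submodule.span ℝ s ⊔ W₀ = W → finrank ℝ W ≤ finrank ℝ W₀ + k →
      ∃ b : Finset V, ↑b ⊆ s ∧ b.card ≤ k ∧ Submodule.span ℝ (↑b : Set V) ⊔ W₀ = W := by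
  induction k with
  | zero =>
    intro W W₀ s hspan hrk
    refine ⟨∅, by simp, le_refl _, ?_⟩
    have hsub : s ⊆ (W₀ : Set V) := by
      intro u hu
      by_contra hu0
      have hlt : W₀ < W₀ ⊔ Submodule.span ℝ {u} := by
        refine lt_of_le_of_ne le_sup_left (fun h => hu0 ?_)
        have hm : u ∈ W₀ ⊔ Submodule.span ℝ {u} :=
          SetLike.le_def.mp le_sup_right (Submodule.mem_span_singleton_self u)
        rwa [← h] at hm
      have hle : W₀ ⊔ Submodule.span ℝ {u} ≤ W := by
        rw [← hspan]
        exact sup_le le_sup_right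
          (le_sup_left.trans' (Submodule.span_mono (Set.singleton_subset_iff.mpr hu)))
      have := (Submodule.finrank_lt_finrank_of_lt hlt).trans_le
        (Submodule.finrank_mono hle)
      omega
    have : Submodule.span ℝ s ≤ W₀ := Submodule.span_le.mpr hsub
    have hW : W = W₀ := by rw [← hspan]; exact le_antisymm (sup_le this le_rfl) le_sup_right
    simp [hW]
  | succ k ih =>
    intro W W₀ s hspan hrk
    by_cases hsub : s ⊆ (W₀ : Set V)
    · have : Submodule.span ℝ s ≤ W₀ := Submodule.span_le.mpr hsub
      have hW : W = W₀ := by rw [← hspan]; exact le_antisymm (sup_le this le_rfl) le_sup_right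
      exact ⟨∅, by simp, by simp, by simp [hW]⟩
    · obtain ⟨u, hus, huW⟩ : ∃ u ∈ s, u ∉ W₀ := by
        by_contra h; push_neg at h; exact hsub h
      set W₀' := W₀ ⊔ Submodule.span ℝ {u} with hW₀'
      have hlt : W₀ < W₀' := by
        refine lt_of_le_of_ne le_sup_left (fun h => huW ?_)
        have hm : u ∈ W₀' := SetLike.le_def.mp le_sup_right (Submodule.mem_span_singleton_self u)
        rwa [← h] at hm
      have hspan' : Submodule.span ℝ s ⊔ W₀' = W := by
        rw [hW₀', ← sup_assoc, sup_comm (Submodule.span ℝ s) W₀, sup_assoc,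
          (sup_eq_left (a := Submodule.span ℝ s)).mpr (Submodule.span_mono (Set.singleton_subset_iff.mpr hus)),
          sup_comm]
        exact hspan
      have hrk' : finrank ℝ W ≤ finrank ℝ W₀' + k := by
        have := Submodule.finrank_lt_finrank_of_lt hlt
        omega
      obtain ⟨b, hbs, hbc, hbspan⟩ := ih W W₀' s hspan' hrk'
      refine ⟨insert u b, ?_, ?_, ?_⟩
      · rw [Finset.coe_insert]
        exact Set.insert_subset hus hbs
      · exact (Finset.card_insert_le _ _).trans (by omega)
      · rw [Finset.coe_insert, Submodule.span_insert, sup_comm (Submodule.span ℝ {u}), sup_assoc]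
        rw [hW₀', sup_comm W₀ (Submodule.span ℝ {u})] at hbspan
        exact hbspan




lemma rank_sup_singleton {W : Submodule ℝ V} {v : V} (hv : v ∉ W) :
    finrank ℝ (Submodule.span ℝ {v} ⊔ W : Submodule ℝ V) = finrank ℝ W + 1 := by
  have hv0 : v ≠ 0 := fun h => hv (h ▸ W.zero_mem)
  have hinf : Submodule.span ℝ {v} ⊓ W = ⊥ := by
    rw [Submodule.eq_bot_iff]
    rintro w ⟨hw1, hw2⟩
    obtain ⟨t, rfl⟩ := Submodule.mem_span_singleton.mp hw1
    rcases eq_or_ne t 0 with rfl | ht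
    · simp
    · have : t⁻¹ • t • v ∈ W := W.smul_mem t⁻¹ hw2
      rw [smul_smul, inv_mul_cancel₀ ht, one_smul] at this
      exact absurd this hv
  have := Submodule.finrank_sup_add_finrank_inf_eq (Submodule.span ℝ {v}) W
  rw [hinf, finrank_span_singleton hv0] at this
  simp only [finrank_bot] at this
  omega

/-- The number of subsets of `M` of size at most `r` is at most `(|M|+1)^r`. -/
lemma card_small_powerset {α : Type*} [DecidableEq α] (M : Finset α) (r : ℕ) :
    ((M.powerset).filter (fun U => U.card ≤ r)).card ≤ (M.card + 1) ^ r := by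
  have hdecomp : (M.powerset).filter (fun U => U.card ≤ r)
      = (Finset.range (r + 1)).biUnion (fun k => M.powersetCard k) := by
    ext U
    simp [Finset.mem_powersetCard, Finset.mem_powerset, Nat.lt_succ_iff]
    tauto
  rw [hdecomp, Finset.card_biUnion]
  · have key : ∀ r : ℕ, ∑ k ∈ Finset.range (r + 1), (M.powersetCard k).card ≤ (M.card + 1) ^ r := by
      intro r
      induction r with
      | zero => simp
      | succ r ih =>
        rw [Finset.sum_range_succ' (fun k => (M.powersetCard k).card)]
        simp only [Finset.card_powersetCard]
        have hstep : ∀ k, M.card.choose (k + 1) ≤ M.card * M.card.choose k := by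
          intro k
          have h1 := Nat.choose_succ_right_eq M.card k
          have h2 : M.card.choose (k + 1) ≤ M.card.choose (k + 1) * (k + 1) :=
            Nat.le_mul_of_pos_right _ (Nat.succ_pos k)
          have h3 : M.card.choose k * (M.card - k) ≤ M.card.choose k * M.card :=
            Nat.mul_le_mul_left _ (Nat.sub_le _ _)
          calc M.card.choose (k + 1) ≤ M.card.choose (k + 1) * (k + 1) := h2
            _ = M.card.choose k * (M.card - k) := h1
            _ ≤ M.card.choose k * M.card := h3
            _ = M.card * M.card.choose k := Nat.mul_comm _ _
        calc (∑ k ∈ Finset.range (r + 1), M.card.choose (k + 1)) + M.card.choose 0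
            ≤ (∑ k ∈ Finset.range (r + 1), M.card * M.card.choose k) + 1 := by
              gcongr with k hk
              · exact hstep k
              · simp
          _ = M.card * (∑ k ∈ Finset.range (r + 1), M.card.choose k) + 1 := by
              rw [Finset.mul_sum]
          _ = M.card * (∑ k ∈ Finset.range (r + 1), (M.powersetCard k).card) + 1 := by
              simp [Finset.card_powersetCard]
          _ ≤ M.card * (M.card + 1) ^ r + 1 := by gcongr
          _ ≤ (M.card + 1) ^ (r + 1) := by
              have : (1:ℕ) ≤ (M.card + 1) ^ r := Nat.one_le_pow _ _ (by omega)
              rw [pow_succ]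
              nlinarith
    exact key r
  · intro a _ b _ hab
    simp only [Finset.disjoint_left, Finset.mem_powersetCard]
    rintro U ⟨_, rfl⟩ ⟨_, h⟩
    exact hab h




lemma dir_notin {P : AffineSubspace ℝ V} {q f₀ : V} (hq : q ∉ P) (hf₀ : f₀ ∈ P) :
    q -ᵥ f₀ ∉ P.direction := by
  intro h
  exact hq (by simpa using AffineSubspace.vadd_mem_of_mem_direction h hf₀)

/-- Intersection lemma: a point of `affineSpan (insert q F)` that lies in `P` lies in `F`,
when `F ≤ P` and `q ∉ P`. -/
lemma mem_flat_of_mem_hyp {P F : AffineSubspace ℝ V} {q f₀ z : V} (hFP : F ≤ P)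
    (hf₀ : f₀ ∈ F) (hq : q ∉ P)
    (hz : z ∈ affineSpan ℝ (insert q (F : Set V))) (hzP : z ∈ P) : z ∈ F := by
  obtain ⟨r, p₀, hp₀, rfl⟩ := (AffineSubspace.mem_affineSpan_insert_iff hf₀ q z).mp hz
  rcases eq_or_ne r 0 with rfl | hr
  · simpa using hp₀
  · exfalso
    have h1 : (r • (q -ᵥ f₀) +ᵥ p₀) -ᵥ p₀ ∈ P.direction :=
      AffineSubspace.vsub_mem_direction hzP (hFP hp₀)
    rw [vadd_vsub] at h1
    have h2 : q -ᵥ f₀ ∈ P.direction := by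
      have := P.direction.smul_mem r⁻¹ h1
      rwa [smul_smul, inv_mul_cancel₀ hr, one_smul] at this
    exact dir_notin hq (hFP hf₀) h2

/-- The affine span of `F` with an extra point `q ∉ P ⊇ F` has rank one more. -/
lemma rank_insert_flat {P F : AffineSubspace ℝ V} {q f₀ : V} (hFP : F ≤ P)
    (hf₀ : f₀ ∈ F) (hq : q ∉ P) :
    finrank ℝ (affineSpan ℝ (insert q (F : Set V))).direction
      = finrank ℝ F.direction + 1 := by
  rw [AffineSubspace.direction_affineSpan_insert hf₀]
  exact rank_sup_singleton fun h =>
    dir_notin hq (hFP hf₀) (SetLike.le_def.mp (AffineSubspace.direction_le hFP) h)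

/-- Extraction, point case: a flat `F` spanned by `T'` and containing `p` is the span of
`p` together with at most `finrank F.direction` points of `T'`. -/
lemma flat_through_point {F : AffineSubspace ℝ V} {T' : Finset V}
    (hT : affineSpan ℝ (T' : Set V) = F) {p : V} (hp : p ∈ F) (k : ℕ)
    (hrk : finrank ℝ F.direction = k) :
    ∃ U : Finset V, U ⊆ T' ∧ U.card ≤ k ∧ affineSpan ℝ (insert p (U : Set V)) = F := by
  classical
  have hspan_insert : affineSpan ℝ (insert p (T' : Set V)) = F := by
    rw [affineSpan_insert_eq_affineSpan ℝ, hT]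
    rw [hT]; exact hp
  set s : Set V := (fun t => t -ᵥ p) '' (insert p (T' : Set V)) with hs
  have hWs : Submodule.span ℝ s = F.direction := by
    rw [← hspan_insert, direction_affineSpan ℝ _,
      vectorSpan_eq_span_vsub_set_right ℝ (Set.mem_insert p _)]
  obtain ⟨b, hbs, hbc, hbspan⟩ := extract_span_aux k F.direction ⊥ s
    (by rw [sup_bot_eq, hWs]) (by simp [hrk])
  rw [sup_bot_eq] at hbspan
  -- lift b back to points of T'
  set g : V → V := fun w =>
    if h : ∃ t ∈ insert p (T' : Set V), t -ᵥ p = w then h.choose else p with hg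
  have hgspec : ∀ w ∈ b, g w ∈ insert p (T' : Set V) ∧ g w -ᵥ p = w := by
    intro w hw
    have hww : ∃ t ∈ insert p (T' : Set V), t -ᵥ p = w := by
      obtain ⟨t, ht, rfl⟩ := hbs hw
      exact ⟨t, ht, rfl⟩
    simp only [hg, dif_pos hww]
    exact ⟨hww.choose_spec.1, hww.choose_spec.2⟩
  set U : Finset V := (b.image g).erase p with hU
  have hUT : U ⊆ T' := by
    intro u hu
    rw [hU, Finset.mem_erase] at hu
    obtain ⟨hup, hu2⟩ := hu
    obtain ⟨w, hw, rfl⟩ := Finset.mem_image.mp hu2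
    rcases (hgspec w hw).1 with h | h
    · exact absurd h hup
    · exact h
  refine ⟨U, hUT, ?_, ?_⟩
  · calc U.card ≤ (b.image g).card := Finset.card_erase_le
      _ ≤ b.card := Finset.card_image_le
      _ ≤ k := hbc
  · -- direction computation
    have hdir : (affineSpan ℝ (insert p (U : Set V))).direction = F.direction := by
      rw [direction_affineSpan ℝ _,
        vectorSpan_eq_span_vsub_set_right ℝ (Set.mem_insert p _)]
      apply le_antisymm
      · rw [Submodule.span_le]
        rintro w ⟨t, ht, rfl⟩
        have htF : t ∈ F := by
          rcases ht with h | h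
          · exact h ▸ hp
          · have := hUT h
            rw [← hT]; exact subset_affineSpan ℝ _ this
        exact AffineSubspace.vsub_mem_direction htF hp
      · rw [← hbspan, Submodule.span_le]
        intro w hw
        have hw' := hgspec w hw
        rcases eq_or_ne (g w) p with h | h
        · have : w = 0 := by rw [← hw'.2, h, vsub_self]
          rw [this]; exact Submodule.zero_mem _
        · have hgU : g w ∈ U := by
            rw [hU, Finset.mem_erase]
            exact ⟨h, Finset.mem_image_of_mem g hw⟩
          apply Submodule.subset_span
          exact ⟨g w, Set.mem_insert_of_mem _ hgU, hw'.2⟩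
    apply AffineSubspace.ext_of_direction_eq hdir
    exact ⟨p, subset_affineSpan ℝ _ (Set.mem_insert p _), hp⟩
/-- Extraction, direction case: a flat `F` spanned by `T'` whose direction contains `v ≠ 0`
is determined by `v` and at most `finrank F.direction` points of `T'`:
`F = affineSpan (U ∪ (v +ᵥ ·) '' U)`. -/
lemma flat_with_direction {F : AffineSubspace ℝ V} {T' : Finset V}
    (hT : affineSpan ℝ (T' : Set V) = F) {v : V} (hv : v ∈ F.direction) (hv0 : v ≠ 0) (k : ℕ)
    (hrk : finrank ℝ F.direction = k + 1) :
    ∃ U : Finset V, U ⊆ T' ∧ U.card ≤ k + 1 ∧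
      affineSpan ℝ ((U : Set V) ∪ (fun u => v +ᵥ u) '' (U : Set V)) = F := by
  classical
  -- T' is nonempty
  have hT'ne : T'.Nonempty := by
    rcases T'.eq_empty_or_nonempty with rfl | h
    · exfalso
      have : F = ⊥ := by rw [← hT]; simp
      rw [this] at hrk
      have h0 : finrank ℝ (⊥ : AffineSubspace ℝ V).direction = 0 := by
        rw [AffineSubspace.direction_bot]; exact finrank_bot ℝ V
      omega
    · exact h
  obtain ⟨u₀, hu₀⟩ := hT'ne
  have hu₀F : u₀ ∈ F := by rw [← hT]; exact subset_affineSpan ℝ _ hu₀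
  set s : Set V := (fun t => t -ᵥ u₀) '' (T' : Set V) with hs
  have hWs : Submodule.span ℝ s = F.direction := by
    rw [← hT, direction_affineSpan ℝ _,
      vectorSpan_eq_span_vsub_set_right ℝ (Finset.mem_coe.mpr hu₀)]
  obtain ⟨b, hbs, hbc, hbspan⟩ := extract_span_aux k F.direction (Submodule.span ℝ {v}) s
    (by rw [hWs]; exact sup_eq_left.mpr ((Submodule.span_le).mpr (by simpa using hv)))
    (by rw [finrank_span_singleton hv0]; omega)
  -- lift b back to points of T'
  set g : V → V := fun w =>
    if h : ∃ t ∈ (T' : Set V), t -ᵥ u₀ = w then h.choose else u₀ with hg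
  have hgspec : ∀ w ∈ b, g w ∈ (T' : Set V) ∧ g w -ᵥ u₀ = w := by
    intro w hw
    have hww : ∃ t ∈ (T' : Set V), t -ᵥ u₀ = w := by
      obtain ⟨t, ht, rfl⟩ := hbs hw
      exact ⟨t, ht, rfl⟩
    simp only [hg, dif_pos hww]
    exact ⟨hww.choose_spec.1, hww.choose_spec.2⟩
  set U : Finset V := insert u₀ (b.image g) with hU
  have hUT : U ⊆ T' := by
    intro u hu
    rw [hU, Finset.mem_insert] at hu
    rcases hu with rfl | hu
    · exact hu₀
    · obtain ⟨w, hw, rfl⟩ := Finset.mem_image.mp hu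
      exact (hgspec w hw).1
  have hUF : ∀ u ∈ U, u ∈ F := fun u hu => by
    rw [← hT]; exact subset_affineSpan ℝ _ (hUT hu)
  refine ⟨U, hUT, ?_, ?_⟩
  · calc U.card ≤ (b.image g).card + 1 := Finset.card_insert_le _ _
      _ ≤ b.card + 1 := by have := Finset.card_image_le (f := g) (s := b); omega
      _ ≤ k + 1 := by omega
  · have hu₀U : u₀ ∈ ((U : Set V) ∪ (fun u => v +ᵥ u) '' (U : Set V)) :=
      Set.mem_union_left _ (by simp [hU])
    have hdir : (affineSpan ℝ ((U : Set V) ∪ (fun u => v +ᵥ u) '' (U : Set V))).direction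
        = F.direction := by
      rw [direction_affineSpan ℝ _, vectorSpan_eq_span_vsub_set_right ℝ hu₀U]
      apply le_antisymm
      · rw [Submodule.span_le]
        rintro w ⟨t, ht, rfl⟩
        have htF : t ∈ F := by
          rcases ht with h | ⟨u, hu, rfl⟩
          · exact hUF t h
          · exact AffineSubspace.vadd_mem_of_mem_direction hv (hUF u hu)
        exact AffineSubspace.vsub_mem_direction htF hu₀F
      · rw [← hbspan]
        apply sup_le
        · rw [Submodule.span_le]
          intro w hw
          rcases eq_or_ne (g w) u₀ with h | h
          · have : w = 0 := by rw [← (hgspec w hw).2, h, vsub_self]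
            rw [this]; exact Submodule.zero_mem _
          · apply Submodule.subset_span
            refine ⟨g w, Set.mem_union_left _ ?_, (hgspec w hw).2⟩
            rw [hU]; exact Finset.mem_insert_of_mem (Finset.mem_image_of_mem g hw)
        · rw [Submodule.span_le]
          intro w hw
          rw [Set.mem_singleton_iff] at hw
          subst hw
          apply Submodule.subset_span
          refine ⟨w +ᵥ u₀, Set.mem_union_right _ ⟨u₀, by simp [hU], rfl⟩, ?_⟩
          simp
    apply AffineSubspace.ext_of_direction_eq hdir
    exact ⟨u₀, subset_affineSpan ℝ _ hu₀U, hu₀F⟩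
/-- Generic injection counting: if every `F` in a finset is reconstructible as `R U` from some
subset `U ⊆ M` with `|U| ≤ r`, then there are at most `(|M|+1)^r` such `F`. -/
lemma card_le_of_reconstruct {β : Type*} (𝓕' : Finset β) (M : Finset V) (r : ℕ)
    (R : Finset V → β)
    (h : ∀ F ∈ 𝓕', ∃ U : Finset V, U ⊆ M ∧ U.card ≤ r ∧ R U = F) :
    𝓕'.card ≤ (M.card + 1) ^ r := by
  classical
  set Φ : β → Finset V := fun F =>
    if hF : ∃ U : Finset V, U ⊆ M ∧ U.card ≤ r ∧ R U = F then hF.choose else ∅ with hΦ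
  have hspec : ∀ F ∈ 𝓕', Φ F ⊆ M ∧ (Φ F).card ≤ r ∧ R (Φ F) = F := by
    intro F hF
    have hex := h F hF
    simp only [hΦ, dif_pos hex]
    exact hex.choose_spec
  calc 𝓕'.card ≤ ((M.powerset).filter (fun U => U.card ≤ r)).card := by
        apply Finset.card_le_card_of_injOn Φ
        · intro F hF
          rw [Finset.mem_coe, Finset.mem_filter, Finset.mem_powerset]
          exact ⟨(hspec F hF).1, (hspec F hF).2.1⟩
        · intro F hF F' hF' hEq
          rw [← (hspec F hF).2.2, ← (hspec F' hF').2.2, hEq]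
    _ ≤ (M.card + 1) ^ r := card_small_powerset M r

/-- Key counting lemma: for a fixed pair of distinct points `q, q'` off the hyperplane `P`,
the number of flats `F` (from a family of spanned `(d-2)`-flats in `P`) such that
`q'` lies in the hyperplane spanned by `F` and `q` is at most `(|M|+1)^(d-2)`. -/
lemma collapse_card_le (hd : 2 ≤ d) {P : AffineSubspace ℝ V}
    (hPrank : finrank ℝ P.direction = d - 1)
    (M : Finset V) (hM : ∀ z ∈ M, z ∈ P)
    (𝓕 : Finset (AffineSubspace ℝ V))
    (h𝓕 : ∀ F ∈ 𝓕, (∃ T' : Finset V, T' ⊆ M ∧ affineSpan ℝ (T' : Set V) = F) ∧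
        finrank ℝ F.direction = d - 2 ∧ F ≤ P ∧ ((F : Set V).Nonempty))
    {q q' : V} (hq : q ∉ P) (hq' : q' ∉ P) (hne : q' ≠ q) :
    (𝓕.filter (fun F : AffineSubspace ℝ V => q' ∈ affineSpan ℝ (insert q ↑F))).card
      ≤ (M.card + 1) ^ (d - 2) := by
  classical
  set v : V := q' -ᵥ q with hv
  have hv0 : v ≠ 0 := vsub_ne_zero.mpr hne
  have hqmem : ∀ F : AffineSubspace ℝ V, q ∈ affineSpan ℝ (insert q (F : Set V)) :=
    fun F => subset_affineSpan ℝ _ (Set.mem_insert q _)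
  have hvdir : ∀ F ∈ 𝓕.filter (fun F : AffineSubspace ℝ V => q' ∈ affineSpan ℝ (insert q ↑F)),
      v ∈ (affineSpan ℝ (insert q (F : Set V))).direction := by
    intro F hF
    rw [Finset.mem_filter] at hF
    exact AffineSubspace.vsub_mem_direction hF.2 (hqmem F)
  by_cases hvP : v ∈ P.direction
  · -- parallel case: `v` lies in the direction of each such flat
    have key : ∀ F ∈ 𝓕.filter (fun F : AffineSubspace ℝ V => q' ∈ affineSpan ℝ (insert q ↑F)),
        v ∈ F.direction := by
      intro F hF
      have hvH := hvdir F hF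
      rw [Finset.mem_filter] at hF
      obtain ⟨_, _, hFP, f₀, hf₀⟩ := h𝓕 F hF.1
      rw [AffineSubspace.direction_affineSpan_insert hf₀] at hvH
      obtain ⟨a, ha, w, hw, hvaw⟩ := Submodule.mem_sup.mp hvH
      obtain ⟨t, rfl⟩ := Submodule.mem_span_singleton.mp ha
      rcases eq_or_ne t 0 with rfl | ht
      · rw [zero_smul, zero_add] at hvaw; rw [← hvaw]; exact hw
      · exfalso
        have h1 : t • (q -ᵥ f₀) ∈ P.direction := by
          have hwP : w ∈ P.direction :=
            SetLike.le_def.mp (AffineSubspace.direction_le hFP) hw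
          have : t • (q -ᵥ f₀) = v - w := by rw [← hvaw]; abel
          rw [this]; exact Submodule.sub_mem _ hvP hwP
        have h2 : q -ᵥ f₀ ∈ P.direction := by
          have := P.direction.smul_mem t⁻¹ h1
          rwa [smul_smul, inv_mul_cancel₀ ht, one_smul] at this
        exact dir_notin hq (hFP hf₀) h2
    -- the case d = 2 is impossible here; otherwise use `flat_with_direction`
    apply card_le_of_reconstruct _ M (d - 2)
      (fun U => affineSpan ℝ ((U : Set V) ∪ (fun u => v +ᵥ u) '' (U : Set V)))
    intro F hF
    have hvF := key F hF
    rw [Finset.mem_filter] at hF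
    obtain ⟨⟨T', hT'M, hT'⟩, hFrank, hFP, hFne⟩ := h𝓕 F hF.1
    have hd3 : 3 ≤ d := by
      by_contra hlt
      have hd2 : d = 2 := by omega
      have : F.direction = ⊥ := Submodule.finrank_eq_zero.mp (by omega)
      rw [this] at hvF
      exact hv0 (by simpa using hvF)
    obtain ⟨U, hUT, hUc, hUspan⟩ := flat_with_direction hT' hvF hv0 (d - 3)
      (by omega)
    exact ⟨U, hUT.trans hT'M, by omega, hUspan⟩
  · -- transversal case: the line `q q'` meets `P` in a point `p` lying in each such flat
    have hPne : (P : Set V).Nonempty := by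
      rw [AffineSubspace.nonempty_iff_ne_bot]
      intro hPbot
      rw [hPbot] at hPrank
      have h0 : finrank ℝ (⊥ : AffineSubspace ℝ V).direction = 0 := by
        rw [AffineSubspace.direction_bot]; exact finrank_bot ℝ V
      omega
    obtain ⟨p₀, hp₀⟩ := hPne
    have hsup : Submodule.span ℝ {v} ⊔ P.direction = ⊤ := by
      apply Submodule.eq_top_of_finrank_eq
      rw [rank_sup_singleton hvP, hPrank, Module.finrank_fintype_fun_eq_card,
        Fintype.card_fin]
      omega
    have hmem : q -ᵥ p₀ ∈ Submodule.span ℝ {v} ⊔ P.direction := by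
      rw [hsup]; trivial
    obtain ⟨a, ha, w, hw, haw⟩ := Submodule.mem_sup.mp hmem
    obtain ⟨t, rfl⟩ := Submodule.mem_span_singleton.mp ha
    set p : V := (-t) • v +ᵥ q with hp
    have hpP : p ∈ P := by
      have hpw : p = w +ᵥ p₀ := by
        have hq_eq : q = (t • v + w) +ᵥ p₀ := by
          rw [haw, vsub_vadd]
        rw [hp, hq_eq]
        simp only [vadd_eq_add, vsub_eq_sub] at *
        module
      rw [hpw]
      exact AffineSubspace.vadd_mem_of_mem_direction hw hp₀
    have key : ∀ F ∈ 𝓕.filter (fun F : AffineSubspace ℝ V => q' ∈ affineSpan ℝ (insert q ↑F)),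
        p ∈ F := by
      intro F hF
      have hvH := hvdir F hF
      rw [Finset.mem_filter] at hF
      obtain ⟨_, _, hFP, f₀, hf₀⟩ := h𝓕 F hF.1
      have hpH : p ∈ affineSpan ℝ (insert q (F : Set V)) := by
        rw [hp]
        exact AffineSubspace.vadd_mem_of_mem_direction
          (Submodule.smul_mem _ _ hvH) (hqmem F)
      exact mem_flat_of_mem_hyp hFP hf₀ hq hpH hpP
    apply card_le_of_reconstruct _ M (d - 2)
      (fun U => affineSpan ℝ (insert p (U : Set V)))
    intro F hF
    have hpF := key F hF
    rw [Finset.mem_filter] at hF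
    obtain ⟨⟨T', hT'M, hT'⟩, hFrank, hFP, hFne⟩ := h𝓕 F hF.1
    obtain ⟨U, hUT, hUc, hUspan⟩ := flat_through_point hT' hpF (d - 2) hFrank
    exact ⟨U, hUT.trans hT'M, hUc, hUspan⟩
/-- Abstract double counting: `𝓕` a family, `e F q` the "hyperplane spanned by flat `F` and
point `q`", all landing in `HS`, with `F` recoverable from `e F q`, and such that any fixed
pair `q ≠ q'` is "collapsed" by at most `B` members of the family. Then
`N²x² ≤ 4·|HS|·(Nx + x²B)`. -/
lemma double_count {α β γ : Type*} [DecidableEq α] [DecidableEq β] [DecidableEq γ]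
    (X : Finset α) (𝓕 : Finset β) (e : β → α → γ) (HS : Finset γ)
    (hmem : ∀ F ∈ 𝓕, ∀ q ∈ X, e F q ∈ HS)
    (hdisj : ∀ F ∈ 𝓕, ∀ F' ∈ 𝓕, ∀ q ∈ X, ∀ q' ∈ X, e F q = e F' q' → F = F')
    (B : ℕ) (hB : ∀ q ∈ X, ∀ q' ∈ X, q' ≠ q → (𝓕.filter fun F => e F q' = e F q).card ≤ B) :
    𝓕.card ^ 2 * X.card ^ 2 ≤ 4 * HS.card * (𝓕.card * X.card + X.card ^ 2 * B) := by
  classical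
  set N := 𝓕.card with hN
  set x := X.card with hx
  set A : β → ℕ := fun F => ∑ q ∈ X, (X.filter fun q' => e F q' = e F q).card with hA
  set t : β → ℕ := fun F => (X.image (e F)).card with ht
  -- Step 1: Cauchy–Schwarz per F
  have step1 : ∀ F, x ^ 2 ≤ t F * A F := by
    intro F
    have hxsum : x = ∑ H ∈ X.image (e F), (X.filter fun a => e F a = H).card :=
      Finset.card_eq_sum_card_image (e F) X
    have hAsum : A F = ∑ H ∈ X.image (e F), ((X.filter fun a => e F a = H).card) ^ 2 := by
      have hcomp := Finset.sum_comp (s := X)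
        (fun H => (X.filter fun a => e F a = H).card) (e F)
      simp only [smul_eq_mul] at hcomp
      rw [hA]
      simp only [hcomp, sq]
    have hcs := sq_sum_le_card_mul_sum_sq (s := X.image (e F))
      (f := fun H => ((X.filter fun a => e F a = H).card : ℝ))
    have hxcast : (x : ℝ) = ∑ H ∈ X.image (e F), ((X.filter fun a => e F a = H).card : ℝ) := by
      rw [hxsum]; push_cast; ring
    have hAcast : (A F : ℝ) = ∑ H ∈ X.image (e F),
        ((X.filter fun a => e F a = H).card : ℝ) ^ 2 := by
      rw [hAsum]; push_cast; ring
    have : (x : ℝ) ^ 2 ≤ (t F : ℝ) * (A F : ℝ) := by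
      rw [hxcast, hAcast]; exact hcs
    exact_mod_cast this
  -- Step 2: sum of the numbers of classes is at most |HS|
  have step2 : ∑ F ∈ 𝓕, t F ≤ HS.card := by
    have hdisjoint : ∀ F ∈ 𝓕, ∀ F' ∈ 𝓕, F ≠ F' →
        Disjoint (X.image (e F)) (X.image (e F')) := by
      intro F hF F' hF' hne
      rw [Finset.disjoint_left]
      rintro H h1 h2
      obtain ⟨q, hq, rfl⟩ := Finset.mem_image.mp h1
      obtain ⟨q', hq', hEq⟩ := Finset.mem_image.mp h2
      exact hne (hdisj F hF F' hF' q hq q' hq' hEq.symm)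
    rw [← Finset.card_biUnion hdisjoint]
    apply Finset.card_le_card
    intro H hH
    obtain ⟨F, hF, hH⟩ := Finset.mem_biUnion.mp hH
    obtain ⟨q, hq, rfl⟩ := Finset.mem_image.mp hH
    exact hmem F hF q hq
  -- Step 3: total collapse bound
  have step3 : ∑ F ∈ 𝓕, A F ≤ N * x + x ^ 2 * B := by
    have hswap : ∑ F ∈ 𝓕, A F
        = ∑ q ∈ X, ∑ q' ∈ X, (𝓕.filter fun F => e F q' = e F q).card := by
      rw [hA]
      simp only [Finset.card_filter]
      rw [Finset.sum_comm]
      congr 1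
      ext q
      rw [Finset.sum_comm]
    rw [hswap]
    have hinner : ∀ q ∈ X, ∑ q' ∈ X, (𝓕.filter fun F => e F q' = e F q).card
        ≤ N + x * B := by
      intro q hq
      rw [← Finset.sum_erase_add _ _ hq]
      have h1 : ∑ q' ∈ X.erase q, (𝓕.filter fun F => e F q' = e F q).card
          ≤ ∑ q' ∈ X.erase q, B := by
        apply Finset.sum_le_sum
        intro q' hq'
        exact hB q hq q' (Finset.mem_of_mem_erase hq') (Finset.ne_of_mem_erase hq')
      have h2 : (𝓕.filter fun F => e F q = e F q).card ≤ N := by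
        rw [hN]; exact Finset.card_filter_le _ _
      have h3 : ∑ q' ∈ X.erase q, B ≤ x * B := by
        rw [Finset.sum_const, smul_eq_mul]
        have : (X.erase q).card ≤ x := (Finset.card_erase_le).trans (le_refl _)
        exact Nat.mul_le_mul_right _ this
      omega
    calc ∑ q ∈ X, ∑ q' ∈ X, (𝓕.filter fun F => e F q' = e F q).card
        ≤ ∑ _q ∈ X, (N + x * B) := Finset.sum_le_sum hinner
      _ = x * (N + x * B) := by rw [Finset.sum_const, smul_eq_mul]
      _ = N * x + x ^ 2 * B := by ring
  -- Step 4: Markov + assembly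
  set D := N * x + x ^ 2 * B with hD
  rcases Nat.eq_zero_or_pos x with hx0 | hxpos
  · rw [hx0]; simp
  rcases Nat.eq_zero_or_pos N with hN0 | hNpos
  · rw [hN0]; simp
  have hDpos : 0 < D := by
    have : 0 < N * x := Nat.mul_pos hNpos hxpos
    omega
  set bad := 𝓕.filter fun F => 2 * D < A F * N with hbad
  set good := 𝓕.filter fun F => ¬ (2 * D < A F * N) with hgood
  have hsplit : good.card + bad.card = N := by
    rw [hgood, hbad, hN]
    rw [Nat.add_comm]
    exact Finset.card_filter_add_card_filter_not _
  have hbadbound : 2 * bad.card ≤ N := by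
    have h1 : bad.card * (2 * D) ≤ ∑ F ∈ bad, A F * N := by
      have : bad.card * (2 * D) = ∑ _F ∈ bad, 2 * D := by
        rw [Finset.sum_const, smul_eq_mul]
      rw [this]
      apply Finset.sum_le_sum
      intro F hF
      rw [hbad, Finset.mem_filter] at hF
      exact le_of_lt hF.2
    have h2 : ∑ F ∈ bad, A F * N ≤ (∑ F ∈ 𝓕, A F) * N := by
      rw [← Finset.sum_mul]
      apply Nat.mul_le_mul_right
      apply Finset.sum_le_sum_of_subset
      rw [hbad]; exact Finset.filter_subset _ _
    have h3 : (∑ F ∈ 𝓕, A F) * N ≤ D * N := Nat.mul_le_mul_right _ step3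
    have := h1.trans (h2.trans h3)
    -- bad.card * (2 * D) ≤ D * N  ⟹  2 * bad.card ≤ N
    have hc : bad.card * 2 * D ≤ N * D := by
      calc bad.card * 2 * D = bad.card * (2 * D) := by ring
        _ ≤ D * N := this
        _ = N * D := by ring
    have := Nat.le_of_mul_le_mul_right hc hDpos
    omega
  have hgoodbound : N ≤ 2 * good.card := by omega
  -- per good F
  have hkey : good.card * (x ^ 2 * N) ≤ HS.card * (2 * D) := by
    have h1 : ∀ F ∈ good, x ^ 2 * N ≤ t F * (2 * D) := by
      intro F hF
      rw [hgood, Finset.mem_filter] at hF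
      have hAN : A F * N ≤ 2 * D := Nat.le_of_not_lt hF.2
      calc x ^ 2 * N ≤ (t F * A F) * N := Nat.mul_le_mul_right _ (step1 F)
        _ = t F * (A F * N) := by ring
        _ ≤ t F * (2 * D) := Nat.mul_le_mul_left _ hAN
    calc good.card * (x ^ 2 * N) = ∑ _F ∈ good, x ^ 2 * N := by
          rw [Finset.sum_const, smul_eq_mul]
      _ ≤ ∑ F ∈ good, t F * (2 * D) := Finset.sum_le_sum h1
      _ = (∑ F ∈ good, t F) * (2 * D) := by rw [Finset.sum_mul]
      _ ≤ (∑ F ∈ 𝓕, t F) * (2 * D) := by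
          apply Nat.mul_le_mul_right
          apply Finset.sum_le_sum_of_subset
          rw [hgood]; exact Finset.filter_subset _ _
      _ ≤ HS.card * (2 * D) := Nat.mul_le_mul_right _ step2
  calc N ^ 2 * x ^ 2 = N * (x ^ 2 * N) := by ring
    _ ≤ (2 * good.card) * (x ^ 2 * N) := Nat.mul_le_mul_right _ hgoodbound
    _ = 2 * (good.card * (x ^ 2 * N)) := by ring
    _ ≤ 2 * (HS.card * (2 * D)) := Nat.mul_le_mul_left _ hkey
    _ = 4 * HS.card * D := by ring

end ErdosBeckHelpers

set_option maxHeartbeats 4000000 in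
/-- higher-dimensional Erdős–Beck, Theorem 3: if `S` is a set of `n` points in
`ℝ^d` and `P` is a hyperplane such that `S ∩ P` spans at least `c₁·|S ∩ P|^(d-1)` distinct
`(d-2)`-flats within `P`, and `|S ∩ P| ≥ c₂·n`, then with `x = |S \ P|`, the number of
hyperplanes spanned by `S` is at least `γ·x·n^(d-1)` with `γ > 0` depending only on
`c₁, c₂, d`. -/
theorem erdos_beck_higher_dim (d : ℕ) (hd : 2 ≤ d) (c₁ c₂ : ℝ) (hc₁ : 0 < c₁) (hc₂ : 0 < c₂) :
    ∃ γ : ℝ, 0 < γ ∧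
      ∀ (n : ℕ) (S : Finset (Fin d → ℝ)) (P : AffineSubspace ℝ (Fin d → ℝ)),
        S.card = n →
        Module.finrank ℝ P.direction = d - 1 →
        (({H : AffineSubspace ℝ (Fin d → ℝ) | H ≤ P ∧
            Module.finrank ℝ H.direction = d - 2 ∧
            ∃ T ⊆ ((↑S : Set (Fin d → ℝ)) ∩ ↑P), affineSpan ℝ T = H}.ncard : ℝ)
          ≥ c₁ * (((↑S : Set (Fin d → ℝ)) ∩ ↑P).ncard : ℝ) ^ (d - 1)) →
        ((((↑S : Set (Fin d → ℝ)) ∩ ↑P).ncard : ℝ) ≥ c₂ * n) →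
        ((SpannedFlats d ↑S (d - 1)).ncard : ℝ)
          ≥ γ * (((↑S : Set (Fin d → ℝ)) \ ↑P).ncard : ℝ) * (n : ℝ) ^ (d - 1) := by
  classical
  refine ⟨min (c₁ * c₂ ^ (d - 1) / 16) (min (c₁ ^ 2 * c₂ ^ d / 2 ^ (d + 3)) ((c₁ * c₂ / 2) ^ d)),
    by positivity, ?_⟩
  set γ₁ : ℝ := c₁ * c₂ ^ (d - 1) / 16 with hγ₁
  set γ₂ : ℝ := c₁ ^ 2 * c₂ ^ d / 2 ^ (d + 3) with hγ₂
  set γ₃ : ℝ := (c₁ * c₂ / 2) ^ d with hγ₃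
  set γ : ℝ := min γ₁ (min γ₂ γ₃) with hγ
  have hγpos : 0 < γ := by rw [hγ, hγ₁, hγ₂, hγ₃]; positivity
  have hγleγ₁ : γ ≤ γ₁ := min_le_left _ _
  have hγleγ₂ : γ ≤ γ₂ := (min_le_right _ _).trans (min_le_left _ _)
  have hγleγ₃ : γ ≤ γ₃ := (min_le_right _ _).trans (min_le_right _ _)
  intro n S P hcard hPrank hsat hrich
  set M : Finset (Fin d → ℝ) := S.filter (fun z => z ∈ P) with hMdef
  set Q : Finset (Fin d → ℝ) := S.filter (fun z => z ∉ P) with hQdef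
  have hMP : ∀ z ∈ M, z ∈ P := fun z hz => (Finset.mem_filter.mp hz).2
  have hMS : ∀ z ∈ M, z ∈ S := fun z hz => (Finset.mem_filter.mp hz).1
  have hQS : ∀ z ∈ Q, z ∈ S := fun z hz => (Finset.mem_filter.mp hz).1
  have hQP : ∀ z ∈ Q, z ∉ P := fun z hz => (Finset.mem_filter.mp hz).2
  have hSPM : ((S : Set (Fin d → ℝ)) ∩ ↑P) = (M : Set (Fin d → ℝ)) := by
    ext z
    simp [hMdef]
  have hSPQ : ((S : Set (Fin d → ℝ)) \ ↑P) = (Q : Set (Fin d → ℝ)) := by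
    ext z
    simp [hQdef]
  rw [hSPM, Set.ncard_coe_finset] at hsat hrich
  rw [hSPQ, Set.ncard_coe_finset]
  -- the finset of spanned hyperplanes
  set HSfin : Finset (AffineSubspace ℝ (Fin d → ℝ)) :=
    (S.powerset.image (fun T : Finset (Fin d → ℝ) => affineSpan ℝ (↑T : Set (Fin d → ℝ)))).filter
      (fun H => finrank ℝ H.direction = d - 1) with hHSdef
  have hHSmem : ∀ H, H ∈ HSfin ↔ (finrank ℝ H.direction = d - 1 ∧
      ∃ T' : Finset (Fin d → ℝ), T' ⊆ S ∧ affineSpan ℝ (T' : Set (Fin d → ℝ)) = H) := by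
    intro H
    rw [hHSdef, Finset.mem_filter, Finset.mem_image]
    constructor
    · rintro ⟨⟨T', hT', rfl⟩, hrk⟩
      exact ⟨hrk, T', Finset.mem_powerset.mp hT', rfl⟩
    · rintro ⟨hrk, T', hT', hspan⟩
      exact ⟨⟨T', Finset.mem_powerset.mpr hT', hspan⟩, hrk⟩
  have hHSeq : SpannedFlats d (S : Set (Fin d → ℝ)) (d - 1) = (HSfin : Set _) := by
    ext H
    rw [Finset.mem_coe, hHSmem]
    simp only [SpannedFlats, Set.mem_setOf_eq]
    constructor
    · rintro ⟨hrk, T, hTS, hT⟩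
      have hTfin : T.Finite := S.finite_toSet.subset hTS
      refine ⟨hrk, hTfin.toFinset, ?_, ?_⟩
      · intro z hz
        have := hTS (hTfin.mem_toFinset.mp hz)
        exact_mod_cast this
      · rw [Set.Finite.coe_toFinset]; exact hT
    · rintro ⟨hrk, T, hTS, hT⟩
      exact ⟨hrk, ↑T, by exact_mod_cast hTS, hT⟩
  rw [hHSeq, Set.ncard_coe_finset]
  -- the finset of spanned (d-2)-flats inside P
  set 𝓕₀ : Finset (AffineSubspace ℝ (Fin d → ℝ)) :=
    (M.powerset.image (fun T : Finset (Fin d → ℝ) => affineSpan ℝ (↑T : Set (Fin d → ℝ)))).filter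
      (fun F => F ≤ P ∧ finrank ℝ F.direction = d - 2) with h𝓕₀def
  have h𝓕₀mem : ∀ F, F ∈ 𝓕₀ ↔ ((∃ T' : Finset (Fin d → ℝ), T' ⊆ M ∧
      affineSpan ℝ (T' : Set (Fin d → ℝ)) = F) ∧ F ≤ P ∧ finrank ℝ F.direction = d - 2) := by
    intro F
    rw [h𝓕₀def, Finset.mem_filter, Finset.mem_image]
    constructor
    · rintro ⟨⟨T', hT', rfl⟩, h1, h2⟩
      exact ⟨⟨T', Finset.mem_powerset.mp hT', rfl⟩, h1, h2⟩
    · rintro ⟨⟨T', hT', hspan⟩, h1, h2⟩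
      exact ⟨⟨T', Finset.mem_powerset.mpr hT', hspan⟩, h1, h2⟩
  have h𝓕₀eq : {H : AffineSubspace ℝ (Fin d → ℝ) | H ≤ P ∧
      Module.finrank ℝ H.direction = d - 2 ∧
      ∃ T ⊆ (M : Set (Fin d → ℝ)), affineSpan ℝ T = H} = (𝓕₀ : Set _) := by
    ext H
    rw [Finset.mem_coe, h𝓕₀mem]
    simp only [Set.mem_setOf_eq]
    constructor
    · rintro ⟨hle, hrk, T, hTM, hT⟩
      have hTfin : T.Finite := M.finite_toSet.subset hTM
      refine ⟨⟨hTfin.toFinset, ?_, ?_⟩, hle, hrk⟩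
      · intro z hz
        have := hTM (hTfin.mem_toFinset.mp hz)
        exact_mod_cast this
      · rw [Set.Finite.coe_toFinset]; exact hT
    · rintro ⟨⟨T, hTM, hT⟩, hle, hrk⟩
      exact ⟨hle, hrk, ↑T, by exact_mod_cast hTM, hT⟩
  rw [h𝓕₀eq, Set.ncard_coe_finset] at hsat
  have hxn : Q.card ≤ n := hcard ▸ Finset.card_filter_le _ _
  clear_value M Q HSfin 𝓕₀
  clear hMdef hQdef hHSdef h𝓕₀def hSPM hSPQ hHSeq h𝓕₀eq
  -- trivial case: no points off `P`
  rcases Nat.eq_zero_or_pos Q.card with hx0 | hxpos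
  · rw [hx0]
    simp only [Nat.cast_zero, mul_zero, zero_mul]
    exact Nat.cast_nonneg _
  have hm1 : 1 ≤ M.card := by
    by_contra hm0
    have hM0 : M.card = 0 := by omega
    rw [hM0] at hrich
    have hn0 : n = 0 := by
      by_contra hn
      have h1n : (1:ℝ) ≤ (n:ℝ) := by exact_mod_cast Nat.one_le_iff_ne_zero.mpr hn
      have : (0:ℝ) < c₂ * n := by nlinarith
      simp only [Nat.cast_zero] at hrich
      linarith
    omega
  obtain ⟨q₀, hq₀Q⟩ := Finset.card_pos.mp hxpos
  have hm1R : (1:ℝ) ≤ (M.card:ℝ) := by exact_mod_cast hm1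
  -- membership of the spanned hyperplanes
  have hHmem : ∀ (F : AffineSubspace ℝ (Fin d → ℝ)) (T' : Finset (Fin d → ℝ)), T' ⊆ M →
      affineSpan ℝ (T' : Set (Fin d → ℝ)) = F → F ≤ P → finrank ℝ F.direction = d - 2 →
      ((F : Set (Fin d → ℝ)).Nonempty) → ∀ q ∈ Q,
      affineSpan ℝ (insert q (F : Set (Fin d → ℝ))) ∈ HSfin := by
    intro F T' hT'M hT'span hFP hFrank hFne q hqQ
    obtain ⟨f₀, hf₀⟩ := hFne
    rw [hHSmem]
    constructor
    · have hri := rank_insert_flat hFP hf₀ (hQP q hqQ)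
      rw [hFrank] at hri
      rw [hri]
      omega
    · refine ⟨insert q T', ?_, ?_⟩
      · intro z hz
        rcases Finset.mem_insert.mp hz with rfl | hz2
        · exact hQS z hqQ
        · exact hMS z (hT'M hz2)
      · rw [Finset.coe_insert, ← hT'span, affineSpan_insert_affineSpan]
  by_cases hsmall : c₁ * (M.card : ℝ) ^ (d - 1) < 2
  · -- bounded case: at least one spanned hyperplane suffices
    have h1H : 1 ≤ HSfin.card := by
      have hFex : ∃ F ∈ 𝓕₀, F ≠ ⊥ := by
        rcases Nat.lt_or_ge d 3 with hd2 | hd3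
        · have hd2' : d = 2 := by omega
          obtain ⟨z, hzM⟩ := Finset.card_pos.mp hm1
          refine ⟨affineSpan ℝ ({z} : Set (Fin d → ℝ)), ?_, ?_⟩
          · rw [h𝓕₀mem]
            refine ⟨⟨{z}, ?_, by simp⟩, ?_, ?_⟩
            · simpa using hzM
            · rw [affineSpan_le]
              simpa using hMP z hzM
            · rw [direction_affineSpan ℝ _, vectorSpan_singleton]
              simp [hd2']
          · intro hbot
            have hzz : z ∈ affineSpan ℝ ({z} : Set (Fin d → ℝ)) :=
              mem_affineSpan ℝ rfl
            rw [hbot] at hzz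
            exact AffineSubspace.notMem_bot _ _ _ hzz
        · have hm0R : (0:ℝ) < (M.card:ℝ) := by linarith
          have hpos : (0:ℝ) < (𝓕₀.card : ℝ) :=
            lt_of_lt_of_le (by positivity) hsat
          have hpos' : 0 < 𝓕₀.card := by exact_mod_cast hpos
          obtain ⟨F, hF⟩ := Finset.card_pos.mp hpos'
          refine ⟨F, hF, ?_⟩
          obtain ⟨_, _, hrk⟩ := (h𝓕₀mem F).mp hF
          intro hbot
          rw [hbot] at hrk
          have h0 : finrank ℝ (⊥ : AffineSubspace ℝ (Fin d → ℝ)).direction = 0 := by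
            rw [AffineSubspace.direction_bot]; exact finrank_bot ℝ _
          omega
      obtain ⟨F, hF, hFbot⟩ := hFex
      obtain ⟨⟨T', hT'M, hT'span⟩, hle, hrk⟩ := (h𝓕₀mem F).mp hF
      have hne := (AffineSubspace.nonempty_iff_ne_bot F).mpr hFbot
      have := hHmem F T' hT'M hT'span hle hrk hne q₀ hq₀Q
      exact Finset.card_pos.mpr ⟨_, this⟩
    -- arithmetic
    have hmR : (M.card:ℝ) ≤ (M.card:ℝ)^(d-1) := by
      exact_mod_cast Nat.le_self_pow (by omega) M.card
    have hc1m : c₁ * (M.card:ℝ) < 2 := by nlinarith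
    have hn2 : c₁ * c₂ * (n:ℝ) < 2 := by nlinarith
    have hγ₃pos : 0 < γ₃ := by rw [hγ₃]; positivity
    have hd1 : d - 1 + 1 = d := by omega
    have hnn : (0:ℝ) ≤ (n:ℝ) := Nat.cast_nonneg n
    have hlt1 : (c₁ * c₂ / 2) * n < 1 := by nlinarith
    have hpow1 : ((c₁ * c₂ / 2) * n) ^ d < 1 :=
      pow_lt_one₀ (by positivity) hlt1 (by omega)
    have hxle : ((Q.card:ℕ):ℝ) ≤ (n:ℝ) := by exact_mod_cast hxn
    have h1 : γ * Q.card * (n:ℝ)^(d-1) ≤ γ₃ * ((n:ℝ) * (n:ℝ)^(d-1)) := by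
      have hp : (0:ℝ) ≤ (n:ℝ)^(d-1) := by positivity
      have hq : (0:ℝ) ≤ (Q.card:ℝ) := Nat.cast_nonneg _
      have : γ * Q.card ≤ γ₃ * n :=
        mul_le_mul hγleγ₃ hxle hq hγ₃pos.le
      calc γ * Q.card * (n:ℝ)^(d-1) ≤ γ₃ * n * (n:ℝ)^(d-1) :=
            mul_le_mul_of_nonneg_right this hp
        _ = γ₃ * ((n:ℝ) * (n:ℝ)^(d-1)) := by ring
    have h2 : γ₃ * ((n:ℝ) * (n:ℝ)^(d-1)) = ((c₁*c₂/2)*n)^d := by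
      rw [hγ₃, mul_pow]
      congr 1
      conv_rhs => rw [← hd1]
      rw [pow_succ]
      ring
    have h3 : (1:ℝ) ≤ (HSfin.card:ℝ) := Nat.one_le_cast.mpr h1H
    linarith
  · -- main case
    push_neg at hsmall
    set 𝓕 : Finset (AffineSubspace ℝ (Fin d → ℝ)) := 𝓕₀.erase ⊥ with h𝓕def
    have h𝓕pack : ∀ F ∈ 𝓕, (∃ T' : Finset (Fin d → ℝ), T' ⊆ M ∧
        affineSpan ℝ (T' : Set (Fin d → ℝ)) = F) ∧
        finrank ℝ F.direction = d - 2 ∧ F ≤ P ∧ ((F : Set (Fin d → ℝ)).Nonempty) := by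
      intro F hF
      obtain ⟨hFbot, hF₀⟩ := Finset.mem_erase.mp hF
      obtain ⟨hT, hle, hrk⟩ := (h𝓕₀mem F).mp hF₀
      exact ⟨hT, hrk, hle, (AffineSubspace.nonempty_iff_ne_bot F).mpr hFbot⟩
    have hNlow : 𝓕₀.card ≤ 𝓕.card + 1 := by
      have hsub : 𝓕₀ ⊆ insert ⊥ 𝓕 := by
        intro F hF
        rcases eq_or_ne F ⊥ with rfl | hne
        · exact Finset.mem_insert_self _ _
        · exact Finset.mem_insert_of_mem (Finset.mem_erase.mpr ⟨hne, hF⟩)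
      calc 𝓕₀.card ≤ (insert ⊥ 𝓕).card := Finset.card_le_card hsub
        _ ≤ 𝓕.card + 1 := Finset.card_insert_le _ _
    have hNreal : (𝓕.card : ℝ) ≥ c₁ * (M.card:ℝ)^(d-1) / 2 := by
      have h1 : (𝓕₀.card : ℝ) ≤ (𝓕.card:ℝ) + 1 := by exact_mod_cast hNlow
      nlinarith
    have hmemDC : ∀ F ∈ 𝓕, ∀ q ∈ Q,
        affineSpan ℝ (insert q (F : Set (Fin d → ℝ))) ∈ HSfin := by
      intro F hF q hq
      obtain ⟨⟨T', hT'M, hT'span⟩, hrk, hle, hne⟩ := h𝓕pack F hF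
      exact hHmem F T' hT'M hT'span hle hrk hne q hq
    have hdisjDC : ∀ F ∈ 𝓕, ∀ F' ∈ 𝓕, ∀ q ∈ Q, ∀ q' ∈ Q,
        affineSpan ℝ (insert q (F : Set (Fin d → ℝ)))
          = affineSpan ℝ (insert q' (F' : Set (Fin d → ℝ))) → F = F' := by
      intro F hF F' hF' q hq q' hq' hEq
      obtain ⟨_, _, hleF, hneF⟩ := h𝓕pack F hF
      obtain ⟨_, _, hleF', hneF'⟩ := h𝓕pack F' hF'
      obtain ⟨f₀, hf₀⟩ := hneF
      obtain ⟨f₀', hf₀'⟩ := hneF'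
      apply le_antisymm
      · intro z hz
        have hz1 : z ∈ affineSpan ℝ (insert q' (F' : Set (Fin d → ℝ))) := by
          rw [← hEq]
          exact subset_affineSpan ℝ _ (Set.mem_insert_of_mem _ hz)
        exact mem_flat_of_mem_hyp hleF' hf₀' (hQP q' hq') hz1 (hleF hz)
      · intro z hz
        have hz1 : z ∈ affineSpan ℝ (insert q (F : Set (Fin d → ℝ))) := by
          rw [hEq]
          exact subset_affineSpan ℝ _ (Set.mem_insert_of_mem _ hz)
        exact mem_flat_of_mem_hyp hleF hf₀ (hQP q hq) hz1 (hleF' hz)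
    have hBDC : ∀ q ∈ Q, ∀ q' ∈ Q, q' ≠ q →
        (𝓕.filter fun F : AffineSubspace ℝ (Fin d → ℝ) =>
            affineSpan ℝ (insert q' (↑F : Set (Fin d → ℝ)))
          = affineSpan ℝ (insert q (↑F : Set (Fin d → ℝ)))).card
          ≤ (M.card + 1) ^ (d - 2) := by
      intro q hq q' hq' hne
      have hsub : (𝓕.filter fun F : AffineSubspace ℝ (Fin d → ℝ) =>
            affineSpan ℝ (insert q' (↑F : Set (Fin d → ℝ)))
          = affineSpan ℝ (insert q (↑F : Set (Fin d → ℝ))))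
          ⊆ (𝓕.filter fun F : AffineSubspace ℝ (Fin d → ℝ) =>
              q' ∈ affineSpan ℝ (insert q (↑F : Set (Fin d → ℝ)))) := by
        intro F hF
        rw [Finset.mem_filter] at hF ⊢
        refine ⟨hF.1, ?_⟩
        rw [← hF.2]
        exact subset_affineSpan ℝ _ (Set.mem_insert _ _)
      calc _ ≤ _ := Finset.card_le_card hsub
        _ ≤ (M.card + 1) ^ (d - 2) :=
          collapse_card_le hd hPrank M hMP 𝓕 h𝓕pack (hQP q hq) (hQP q' hq') hne
    have hcount := double_count Q 𝓕
      (fun (F : AffineSubspace ℝ (Fin d → ℝ)) q => affineSpan ℝ (insert q (↑F : Set (Fin d → ℝ))))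
      HSfin hmemDC hdisjDC ((M.card + 1) ^ (d - 2)) hBDC
    have hN1R : (1:ℝ) ≤ (𝓕.card:ℝ) := by nlinarith
    have hN1 : 1 ≤ 𝓕.card := by exact_mod_cast hN1R
    have hxnR : ((Q.card:ℕ):ℝ) ≤ (n:ℝ) := by exact_mod_cast hxn
    have hQnn : (0:ℝ) ≤ (Q.card:ℝ) := Nat.cast_nonneg _
    have hHnn : (0:ℝ) ≤ (HSfin.card:ℝ) := Nat.cast_nonneg _
    have hpowm : (c₂*(n:ℝ))^(d-1) ≤ (M.card:ℝ)^(d-1) :=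
      pow_le_pow_left₀ (by positivity) hrich _
    by_cases hcase : Q.card * ((M.card + 1) ^ (d - 2)) ≤ 𝓕.card
    · -- rich case: many flats compared to collapse bound
      have hstep : 𝓕.card ^ 2 * Q.card ^ 2 ≤ (8 * HSfin.card) * (𝓕.card * Q.card) := by
        have h1 : Q.card ^ 2 * ((M.card + 1) ^ (d - 2))
            = Q.card * (Q.card * ((M.card + 1) ^ (d - 2))) := by ring
        have h2 : Q.card * (Q.card * ((M.card + 1) ^ (d - 2))) ≤ Q.card * 𝓕.card :=
          Nat.mul_le_mul_left _ hcase
        calc 𝓕.card ^ 2 * Q.card ^ 2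
            ≤ 4 * HSfin.card * (𝓕.card * Q.card + Q.card ^ 2 * ((M.card + 1) ^ (d - 2))) :=
              hcount
          _ ≤ 4 * HSfin.card * (𝓕.card * Q.card + Q.card * 𝓕.card) := by
              apply Nat.mul_le_mul_left
              omega
          _ = (8 * HSfin.card) * (𝓕.card * Q.card) := by ring
      have hNx : 𝓕.card * Q.card ≤ 8 * HSfin.card := by
        have hpos : 0 < 𝓕.card * Q.card := Nat.mul_pos (by omega) hxpos
        apply Nat.le_of_mul_le_mul_right _ hpos
        calc 𝓕.card * Q.card * (𝓕.card * Q.card) = 𝓕.card ^ 2 * Q.card ^ 2 := by ring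
          _ ≤ (8 * HSfin.card) * (𝓕.card * Q.card) := hstep
      have hNxR : (𝓕.card:ℝ) * Q.card ≤ 8 * HSfin.card := by exact_mod_cast hNx
      have h2N : c₁ * (M.card:ℝ)^(d-1) ≤ 2 * 𝓕.card := by linarith
      calc γ * Q.card * (n:ℝ)^(d-1) ≤ γ₁ * Q.card * (n:ℝ)^(d-1) := by
            have : (0:ℝ) ≤ (Q.card:ℝ) * (n:ℝ)^(d-1) := by positivity
            nlinarith
        _ = c₁ * ((c₂*(n:ℝ))^(d-1)) * Q.card / 16 := by
            rw [hγ₁, mul_pow]; ring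
        _ ≤ c₁ * (M.card:ℝ)^(d-1) * Q.card / 16 := by gcongr
        _ ≤ (2 * 𝓕.card) * Q.card / 16 := by gcongr
        _ = (𝓕.card:ℝ) * Q.card / 8 := by ring
        _ ≤ (8 * HSfin.card) / 8 := by gcongr
        _ = (HSfin.card:ℝ) := by ring
    · -- saturated case: collapse bound dominates
      push_neg at hcase
      have hstep : 𝓕.card ^ 2 * Q.card ^ 2
          ≤ (8 * HSfin.card * ((M.card + 1) ^ (d - 2))) * Q.card ^ 2 := by
        have h2 : 𝓕.card * Q.card ≤ Q.card ^ 2 * ((M.card + 1) ^ (d - 2)) := by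
          calc 𝓕.card * Q.card ≤ (Q.card * ((M.card + 1) ^ (d - 2))) * Q.card :=
                Nat.mul_le_mul_right _ (le_of_lt hcase)
            _ = Q.card ^ 2 * ((M.card + 1) ^ (d - 2)) := by ring
        calc 𝓕.card ^ 2 * Q.card ^ 2
            ≤ 4 * HSfin.card * (𝓕.card * Q.card + Q.card ^ 2 * ((M.card + 1) ^ (d - 2))) :=
              hcount
          _ ≤ 4 * HSfin.card * (2 * (Q.card ^ 2 * ((M.card + 1) ^ (d - 2)))) := by
              apply Nat.mul_le_mul_left
              omega
          _ = (8 * HSfin.card * ((M.card + 1) ^ (d - 2))) * Q.card ^ 2 := by ring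
      have hN2 : 𝓕.card ^ 2 ≤ 8 * HSfin.card * ((M.card + 1) ^ (d - 2)) := by
        have hpos : 0 < Q.card ^ 2 := pow_pos hxpos _
        apply Nat.le_of_mul_le_mul_right _ hpos
        exact hstep
      have hN2R : (𝓕.card:ℝ)^2 ≤ 8 * HSfin.card * (((M.card:ℝ) + 1) ^ (d - 2)) := by
        exact_mod_cast hN2
      have hexp : d - 1 + (d - 1) = d + (d - 2) := by omega
      have hA2 : (M.card:ℝ)^(d-1) * (M.card:ℝ)^(d-1) = (M.card:ℝ)^d * (M.card:ℝ)^(d-2) := by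
        rw [← pow_add, ← pow_add, hexp]
      have hBle : ((M.card:ℝ) + 1) ^ (d - 2) ≤ 2^(d-2) * (M.card:ℝ)^(d-2) := by
        have h2m : (M.card:ℝ) + 1 ≤ 2 * (M.card:ℝ) := by linarith
        calc ((M.card:ℝ) + 1) ^ (d - 2) ≤ (2 * (M.card:ℝ)) ^ (d - 2) :=
              pow_le_pow_left₀ (by positivity) h2m _
          _ = 2^(d-2) * (M.card:ℝ)^(d-2) := by rw [mul_pow]
      have hNsq : (c₁ * (M.card:ℝ)^(d-1) / 2)^2 ≤ (𝓕.card:ℝ)^2 :=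
        pow_le_pow_left₀ (by positivity) hNreal 2
      have h32 : (2:ℝ)^(d+3) = 32 * 2^(d-2) := by
        rw [show d + 3 = (d-2) + 5 by omega, pow_add]; ring
      have key : c₁^2 * (M.card:ℝ)^d ≤ 2^(d+3) * (HSfin.card:ℝ) := by
        have hmdpos : (0:ℝ) < (M.card:ℝ)^(d-2) := by positivity
        rw [← mul_le_mul_iff_of_pos_right hmdpos]
        have e1 : (c₁ * (M.card:ℝ)^(d-1) / 2)^2
            = c₁^2 * (M.card:ℝ)^d * (M.card:ℝ)^(d-2) / 4 := by
          rw [div_pow, mul_pow, ← pow_mul]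
          rw [show (d-1) * 2 = (d-1) + (d-1) by ring, pow_add, hA2]
          ring
        have e2 : (8:ℝ) * HSfin.card * (2^(d-2) * (M.card:ℝ)^(d-2))
            = (2^(d+3) * (HSfin.card:ℝ)) * (M.card:ℝ)^(d-2) / 4 := by
          rw [h32]; ring
        have chain : (c₁ * (M.card:ℝ)^(d-1) / 2)^2
            ≤ (8:ℝ) * HSfin.card * (2^(d-2) * (M.card:ℝ)^(d-2)) := by
          calc (c₁ * (M.card:ℝ)^(d-1) / 2)^2 ≤ (𝓕.card:ℝ)^2 := hNsq
            _ ≤ 8 * HSfin.card * (((M.card:ℝ) + 1) ^ (d - 2)) := hN2R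
            _ ≤ (8:ℝ) * HSfin.card * (2^(d-2) * (M.card:ℝ)^(d-2)) := by gcongr
        rw [e1, e2] at chain
        linarith
      -- conclude
      have hd1 : d - 1 + 1 = d := by omega
      have hnd : (n:ℝ) * (n:ℝ)^(d-1) = (n:ℝ)^d := by
        conv_rhs => rw [← hd1]
        rw [pow_succ]
        ring
      have hcnd : (c₂*(n:ℝ))^d ≤ (M.card:ℝ)^d :=
        pow_le_pow_left₀ (by positivity) hrich _
      have hfinal : γ₂ * ((n:ℝ)^d) ≤ (HSfin.card:ℝ) := by
        rw [hγ₂]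
        rw [div_mul_eq_mul_div, div_le_iff₀ (by positivity)]
        calc c₁^2 * c₂^d * (n:ℝ)^d = c₁^2 * ((c₂*(n:ℝ))^d) := by rw [mul_pow]; ring
          _ ≤ c₁^2 * (M.card:ℝ)^d := by gcongr <;> positivity
          _ ≤ 2^(d+3) * (HSfin.card:ℝ) := key
          _ = (HSfin.card:ℝ) * 2^(d+3) := by ring
      calc γ * Q.card * (n:ℝ)^(d-1) ≤ γ₂ * ((n:ℝ) * (n:ℝ)^(d-1)) := by
            have hp : (0:ℝ) ≤ (n:ℝ)^(d-1) := by positivity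
            have hγ₂pos : 0 < γ₂ := by rw [hγ₂]; positivity
            have : γ * Q.card ≤ γ₂ * n := mul_le_mul hγleγ₂ hxnR hQnn hγ₂pos.le
            calc γ * Q.card * (n:ℝ)^(d-1) ≤ γ₂ * n * (n:ℝ)^(d-1) :=
                  mul_le_mul_of_nonneg_right this hp
              _ = γ₂ * ((n:ℝ) * (n:ℝ)^(d-1)) := by ring
        _ = γ₂ * ((n:ℝ)^d) := by rw [hnd]
        _ ≤ (HSfin.card:ℝ) := hfinal
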